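/- Let (A;E) be an exact category with exact products and let {I_j | j ∈ J} be a set-indexed family of special precovering ideals of (A;E). Then the intersection ⋂_{j ∈ J} I_j is a special precovering ideal of (A;E). -/

import Mathlib

open CategoryTheory CategoryTheory.Limits

universe w v u

namespace IdealApprox

/-- The data of an exact structure: a class of composable pairs
(the "conflations" `B ⟶ C ⟶ X`). -/
structure ExactStructureData (A : Type u) [Category.{v} A] [Preadditive A] :
    Type (max u v) where
  conf : ∀ ⦃B C X : A⦄, (B ⟶ C) → (C ⟶ X) → Prop

/-- An ideal of an additive category: an additive subbifunctor of `Hom`. -/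
structure Ideal (A : Type u) [Category.{v} A] [Preadditive A] : Type (max u v) where
  mem : ∀ ⦃X Y : A⦄, (X ⟶ Y) → Prop
  zero_mem : ∀ X Y : A, mem (0 : X ⟶ Y)
  add_mem : ∀ ⦃X Y : A⦄ ⦃f g : X ⟶ Y⦄, mem f → mem g → mem (f + g)
  neg_mem : ∀ ⦃X Y : A⦄ ⦃f : X ⟶ Y⦄, mem f → mem (-f)
  comp_mem : ∀ ⦃W X Y Z : A⦄ (h : W ⟶ X) ⦃g : X ⟶ Y⦄ (k : Y ⟶ Z), mem g → mem (h ≫ g ≫ k)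

/-- A class of morphisms of a category. -/
abbrev MorClass (A : Type u) [Category.{v} A] : Type (max u v) :=
  ∀ ⦃X Y : A⦄, (X ⟶ Y) → Prop

variable {A : Type u} [Category.{v} A] [Preadditive A]

/-- `(i, p)` is a kernel-cokernel pair. -/
structure IsKernelCokernelPair {B C X : A} (i : B ⟶ C) (p : C ⟶ X) : Prop where
  w : i ≫ p = 0
  isKernel : Nonempty (IsLimit (KernelFork.ofι i w))
  isCokernel : Nonempty (IsColimit (CokernelCofork.ofπ p w))

/-- The maximal candidate exact structure: all kernel-cokernel pairs.  On an abelian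
category (such as a module category) this is the standard exact (abelian) structure. -/
def maxExact (A : Type u) [Category.{v} A] [Preadditive A] : ExactStructureData A :=
  ⟨fun _ _ _ i p => IsKernelCokernelPair i p⟩

/-- `m` is an inflation: it occurs as the first map of a conflation. -/
def ExactStructureData.IsInflation (E : ExactStructureData A) {B C : A} (m : B ⟶ C) : Prop :=
  ∃ (X : A) (p : C ⟶ X), E.conf m p

/-- `p` is a deflation: it occurs as the second map of a conflation. -/
def ExactStructureData.IsDeflation (E : ExactStructureData A) {C X : A} (p : C ⟶ X) : Prop :=
  ∃ (B : A) (i : B ⟶ C), E.conf i p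

/-- The axioms of a Quillen exact category `(A; E)`. -/
structure ExactStructureData.IsExact (E : ExactStructureData A) : Prop where
  ker_coker : ∀ ⦃B C X : A⦄ ⦃i : B ⟶ C⦄ ⦃p : C ⟶ X⦄, E.conf i p → IsKernelCokernelPair i p
  iso_closed : ∀ ⦃B C X B' C' X' : A⦄ ⦃i : B ⟶ C⦄ ⦃p : C ⟶ X⦄ ⦃i' : B' ⟶ C'⦄ ⦃p' : C' ⟶ X'⦄
      (eB : B ≅ B') (eC : C ≅ C') (eX : X ≅ X'),
      i ≫ eC.hom = eB.hom ≫ i' → p ≫ eX.hom = eC.hom ≫ p' → E.conf i p → E.conf i' p'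
  id_inflation : ∀ X : A, E.IsInflation (𝟙 X)
  id_deflation : ∀ X : A, E.IsDeflation (𝟙 X)
  comp_inflation : ∀ ⦃X Y Z : A⦄ ⦃f : X ⟶ Y⦄ ⦃g : Y ⟶ Z⦄,
      E.IsInflation f → E.IsInflation g → E.IsInflation (f ≫ g)
  comp_deflation : ∀ ⦃X Y Z : A⦄ ⦃f : X ⟶ Y⦄ ⦃g : Y ⟶ Z⦄,
      E.IsDeflation f → E.IsDeflation g → E.IsDeflation (f ≫ g)
  pushout_inflation : ∀ ⦃X Y Z : A⦄ (m : X ⟶ Y) (f : X ⟶ Z), E.IsInflation m →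
      ∃ (W : A) (g : Y ⟶ W) (m' : Z ⟶ W), IsPushout m f g m' ∧ E.IsInflation m'
  pullback_deflation : ∀ ⦃X Y Z : A⦄ (p : Y ⟶ X) (f : Z ⟶ X), E.IsDeflation p →
      ∃ (W : A) (g : W ⟶ Y) (p' : W ⟶ Z), IsPullback g p' p f ∧ E.IsDeflation p'

/-- `Ext(a,b) = 0`: the composite `Ext(A1,B0) ⟶ Ext(A0,B1)` (pullback along `a`
followed by pushout along `b`) vanishes.  Elementwise: for every conflation
`B0 ⟶ C ⟶ A1` and every pushout of it along `b` (a conflation `B1 ⟶ C' ⟶ A1`),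
the morphism `a` lifts along the deflation `C' ⟶ A1`, i.e. the pullback along `a`
of the pushout along `b` splits. -/
def ExtZero (E : ExactStructureData A) {A0 A1 B0 B1 : A} (a : A0 ⟶ A1) (b : B0 ⟶ B1) : Prop :=
  ∀ ⦃C : A⦄ (i : B0 ⟶ C) (p : C ⟶ A1), E.conf i p →
    ∀ ⦃C' : A⦄ (c : C ⟶ C') (i' : B1 ⟶ C') (p' : C' ⟶ A1),
      IsPushout i b c i' → c ≫ p' = p → i' ≫ p' = 0 →
      ∃ s : A0 ⟶ C', s ≫ p' = a

/-- The class of morphisms left `Ext`-orthogonal to every member of `M`. -/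
def leftPerp (E : ExactStructureData A) (M : MorClass A) : MorClass A :=
  fun _ _ a => ∀ ⦃B0 B1 : A⦄ (b : B0 ⟶ B1), M b → ExtZero E a b

/-- The class of morphisms right `Ext`-orthogonal to every member of `M`. -/
def rightPerp (E : ExactStructureData A) (M : MorClass A) : MorClass A :=
  fun _ _ b => ∀ ⦃A0 A1 : A⦄ (a : A0 ⟶ A1), M a → ExtZero E a b

/-- Intersection of two classes of morphisms. -/
def interClass (M N : MorClass A) : MorClass A := fun _ _ f => M f ∧ N f

/-- Intersection of a set-indexed family of classes of morphisms. -/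
def interFamily {ι : Type w} (J : ι → MorClass A) : MorClass A := fun _ _ f => ∀ i, J i f

/-- `j : B ⟶ C0` is a special `J`-preenvelope of `B`: it belongs to `J` and appears as the
inflation of a conflation admitting a morphism of conflations (identity on `B`) whose
right-hand component lies in `⊥J`. -/
def IsSpecialPreenvelope (E : ExactStructureData A) (J : MorClass A) {B C0 : A}
    (j : B ⟶ C0) : Prop :=
  J j ∧ ∃ (A0 A1 C1 : A) (p0 : C0 ⟶ A0) (j' : B ⟶ C1) (p1 : C1 ⟶ A1)
      (c : C0 ⟶ C1) (a : A0 ⟶ A1),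
    E.conf j p0 ∧ E.conf j' p1 ∧ j ≫ c = j' ∧ p0 ≫ a = c ≫ p1 ∧ leftPerp E J a

/-- `J` is a special preenveloping ideal (class). -/
def SpecialPreenveloping (E : ExactStructureData A) (J : MorClass A) : Prop :=
  ∀ B : A, ∃ (C0 : A) (j : B ⟶ C0), IsSpecialPreenvelope E J j

/-- `e : D1 ⟶ B` is a special `I`-precover of `B`. -/
def IsSpecialPrecover (E : ExactStructureData A) (I : MorClass A) {D1 B : A}
    (e : D1 ⟶ B) : Prop :=
  I e ∧ ∃ (K0 K1 D0 : A) (i0 : K0 ⟶ D0) (p0 : D0 ⟶ B) (i1 : K1 ⟶ D1)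
      (k : K0 ⟶ K1) (d : D0 ⟶ D1),
    E.conf i0 p0 ∧ E.conf i1 e ∧ i0 ≫ d = k ≫ i1 ∧ d ≫ e = p0 ∧ rightPerp E I k

/-- `I` is a special precovering ideal (class). -/
def SpecialPrecovering (E : ExactStructureData A) (I : MorClass A) : Prop :=
  ∀ B : A, ∃ (D1 : A) (e : D1 ⟶ B), IsSpecialPrecover E I e

/-- The ideal of projective morphisms: morphisms left `Ext`-orthogonal to all morphisms. -/
def projClass (E : ExactStructureData A) : MorClass A :=
  fun _ _ p => ∀ ⦃B0 B1 : A⦄ (b : B0 ⟶ B1), ExtZero E p b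

/-- The ideal of injective morphisms: morphisms right `Ext`-orthogonal to all morphisms. -/
def injClass (E : ExactStructureData A) : MorClass A :=
  fun _ _ j => ∀ ⦃A0 A1 : A⦄ (a : A0 ⟶ A1), ExtZero E a j

/-- Every object is the codomain of a projective morphism. -/
def HasEnoughProjectiveMorphisms (E : ExactStructureData A) : Prop :=
  ∀ X : A, ∃ (P : A) (p : P ⟶ X), projClass E p

/-- Every object is the domain of an injective morphism. -/
def HasEnoughInjectiveMorphisms (E : ExactStructureData A) : Prop :=
  ∀ X : A, ∃ (Y : A) (j : X ⟶ Y), injClass E j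

/-- `(I, J)` is an ideal cotorsion pair: `I = ⊥J` and `J = I⊥`. -/
def IsIdealCotorsionPair (E : ExactStructureData A) (I J : MorClass A) : Prop :=
  (∀ ⦃X Y : A⦄ (f : X ⟶ Y), I f ↔ leftPerp E J f) ∧
  (∀ ⦃X Y : A⦄ (f : X ⟶ Y), J f ↔ rightPerp E I f)

/-- A complete ideal cotorsion pair: `I` is special precovering and `J` is special
preenveloping. -/
def IsCompleteIdealCotorsionPair (E : ExactStructureData A) (I J : MorClass A) : Prop :=
  IsIdealCotorsionPair E I J ∧ SpecialPrecovering E I ∧ SpecialPreenveloping E J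

/-- `c = b ⋆ a` is an ME (mono-epi) extension of the arrow `a` by the arrow `b`. -/
def IsMEExtension (E : ExactStructureData A) {B0 B1 A0 A1 C0 C1 : A}
    (b : B0 ⟶ B1) (a : A0 ⟶ A1) (c : C0 ⟶ C1) : Prop :=
  ∃ (i0 : B0 ⟶ C0) (p0 : C0 ⟶ A0) (i1 : B1 ⟶ C1) (p1 : C1 ⟶ A1)
    (Cm : A) (im : B0 ⟶ Cm) (pm : Cm ⟶ A1) (c1 : C0 ⟶ Cm) (c2 : Cm ⟶ C1),
    E.conf i0 p0 ∧ E.conf i1 p1 ∧ E.conf im pm ∧ c = c1 ≫ c2 ∧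
    i0 ≫ c1 = im ∧ c1 ≫ pm = p0 ≫ a ∧ im ≫ c2 = b ≫ i1 ∧ c2 ≫ p1 = pm

/-- `I ⋄ K` : the class of all ME-extensions `i ⋆ k` with `i ∈ I`, `k ∈ K`. -/
def diamond (E : ExactStructureData A) (I K : MorClass A) : MorClass A :=
  fun _ _ c => ∃ (B0 B1 A0 A1 : A) (b : B0 ⟶ B1) (a : A0 ⟶ A1),
    I b ∧ K a ∧ IsMEExtension E b a c

/-- `j` is a `J`-preenvelope (left approximation). -/
def IsPreenvelope (J : MorClass A) {B C : A} (j : B ⟶ C) : Prop :=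
  J j ∧ ∀ ⦃C' : A⦄ (j' : B ⟶ C'), J j' → ∃ f : C ⟶ C', j ≫ f = j'

/-- `J` is a preenveloping ideal (class). -/
def Preenveloping (J : MorClass A) : Prop :=
  ∀ B : A, ∃ (C : A) (j : B ⟶ C), IsPreenvelope J j

/-- `e` is an `I`-precover (right approximation). -/
def IsPrecover (I : MorClass A) {D B : A} (e : D ⟶ B) : Prop :=
  I e ∧ ∀ ⦃D' : A⦄ (e' : D' ⟶ B), I e' → ∃ f : D' ⟶ D, f ≫ e = e'

/-- `I` is a precovering ideal (class). -/
def Precovering (I : MorClass A) : Prop :=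
  ∀ B : A, ∃ (D : A) (e : D ⟶ B), IsPrecover I e

/-- `J` is monic preenveloping: every object admits a preenvelope which is an inflation. -/
def MonicPreenveloping (E : ExactStructureData A) (J : MorClass A) : Prop :=
  ∀ B : A, ∃ (C : A) (j : B ⟶ C), E.IsInflation j ∧ IsPreenvelope J j

/-- `I` is epic precovering: every object admits a precover which is a deflation. -/
def EpicPrecovering (E : ExactStructureData A) (I : MorClass A) : Prop :=
  ∀ B : A, ∃ (D : A) (e : D ⟶ B), E.IsDeflation e ∧ IsPrecover I e

/-- A conflation of arrows `b ⟶ c ⟶ a` in `(Arr(A); Arr(E))`, encoded componentwise: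
two conflations `(i0, p0)`, `(i1, p1)` together with the commutativity of the two squares. -/
def IsArrowConf (E : ExactStructureData A) {B0 B1 C0 C1 A0 A1 : A}
    (b : B0 ⟶ B1) (c : C0 ⟶ C1) (a : A0 ⟶ A1)
    (i0 : B0 ⟶ C0) (p0 : C0 ⟶ A0) (i1 : B1 ⟶ C1) (p1 : C1 ⟶ A1) : Prop :=
  E.conf i0 p0 ∧ E.conf i1 p1 ∧ i0 ≫ c = b ≫ i1 ∧ p0 ≫ a = c ≫ p1

/-- An ME (mono-epi) conflation of arrows, encoded componentwise. -/
def IsMEArrowConf (E : ExactStructureData A) {B0 B1 C0 C1 A0 A1 : A}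
    (b : B0 ⟶ B1) (c : C0 ⟶ C1) (a : A0 ⟶ A1)
    (i0 : B0 ⟶ C0) (p0 : C0 ⟶ A0) (i1 : B1 ⟶ C1) (p1 : C1 ⟶ A1) : Prop :=
  IsArrowConf E b c a i0 p0 i1 p1 ∧
  ∃ (Cm : A) (im : B0 ⟶ Cm) (pm : Cm ⟶ A1) (c1 : C0 ⟶ Cm) (c2 : Cm ⟶ C1),
    E.conf im pm ∧ c = c1 ≫ c2 ∧ i0 ≫ c1 = im ∧ c1 ≫ pm = p0 ≫ a ∧
    im ≫ c2 = b ≫ i1 ∧ c2 ≫ p1 = pm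

/-- Equivalence (isomorphism fixing the two end arrows) of conflations of arrows. -/
def ArrowConfEquiv {B0 B1 C0 C1 D0 D1 A0 A1 : A}
    (c : C0 ⟶ C1) (i0 : B0 ⟶ C0) (p0 : C0 ⟶ A0) (i1 : B1 ⟶ C1) (p1 : C1 ⟶ A1)
    (d : D0 ⟶ D1) (j0 : B0 ⟶ D0) (q0 : D0 ⟶ A0) (j1 : B1 ⟶ D1) (q1 : D1 ⟶ A1) : Prop :=
  ∃ (e0 : C0 ≅ D0) (e1 : C1 ≅ D1),
    c ≫ e1.hom = e0.hom ≫ d ∧ i0 ≫ e0.hom = j0 ∧ e0.hom ≫ q0 = p0 ∧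
    i1 ≫ e1.hom = j1 ∧ e1.hom ≫ q1 = p1

/-- `(A; E)` has exact coproducts: coproducts exist and a coproduct of conflations is a
conflation. -/
def HasExactCoproducts [HasCoproducts.{w} A] (E : ExactStructureData A) : Prop :=
  ∀ (ι : Type w) (B C X : ι → A) (i : ∀ j, B j ⟶ C j) (p : ∀ j, C j ⟶ X j),
    (∀ j, E.conf (i j) (p j)) → E.conf (Limits.Sigma.map i) (Limits.Sigma.map p)

/-- `(A; E)` has exact products: products exist and a product of conflations is a
conflation. -/
def HasExactProducts [HasProducts.{w} A] (E : ExactStructureData A) : Prop :=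
  ∀ (ι : Type w) (B C X : ι → A) (i : ∀ j, B j ⟶ C j) (p : ∀ j, C j ⟶ X j),
    (∀ j, E.conf (i j) (p j)) → E.conf (Limits.Pi.map i) (Limits.Pi.map p)

/-- The ideal generated by a set-indexed family of morphisms: finite sums of
composites through the generators. -/
def genIdeal {ι : Type w} {X0 X1 : ι → A} (m : ∀ i, X0 i ⟶ X1 i) : MorClass A :=
  fun X Y f => ∃ (n : ℕ) (j : Fin n → ι) (g : ∀ k : Fin n, X ⟶ X0 (j k))
    (h : ∀ k : Fin n, X1 (j k) ⟶ Y),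
    f = ∑ k : Fin n, g k ≫ m (j k) ≫ h k

/-- The sum of a set-indexed family of ideals: finite sums of members. -/
def idealFamilySum {ι : Type w} (I : ι → Ideal A) : MorClass A :=
  fun X Y f => ∃ (n : ℕ) (j : Fin n → ι) (g : Fin n → (X ⟶ Y)),
    (∀ k, (I (j k)).mem (g k)) ∧ f = ∑ k : Fin n, g k

/-- Containment of ideals. -/
def Ideal.le (I J : Ideal A) : Prop := ∀ ⦃X Y : A⦄ ⦃f : X ⟶ Y⦄, I.mem f → J.mem f

/-- Intersection of two ideals. -/
def Ideal.inf (I J : Ideal A) : Ideal A where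
  mem := fun _ _ f => I.mem f ∧ J.mem f
  zero_mem := fun X Y => ⟨I.zero_mem X Y, J.zero_mem X Y⟩
  add_mem := fun _ _ _ _ hf hg => ⟨I.add_mem hf.1 hg.1, J.add_mem hf.2 hg.2⟩
  neg_mem := fun _ _ _ hf => ⟨I.neg_mem hf.1, J.neg_mem hf.2⟩
  comp_mem := fun _ _ _ _ h _ k hg => ⟨I.comp_mem h k hg.1, J.comp_mem h k hg.2⟩

/-- Sum of two ideals. -/
def Ideal.sum (I J : Ideal A) : Ideal A where
  mem := fun _ _ f => ∃ g h, I.mem g ∧ J.mem h ∧ f = g + h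
  zero_mem := fun X Y => ⟨0, 0, I.zero_mem X Y, J.zero_mem X Y, by simp⟩
  add_mem := by
    rintro X Y f g ⟨f1, f2, hf1, hf2, rfl⟩ ⟨g1, g2, hg1, hg2, rfl⟩
    exact ⟨f1 + g1, f2 + g2, I.add_mem hf1 hg1, J.add_mem hf2 hg2, by abel⟩
  neg_mem := by
    rintro X Y f ⟨f1, f2, h1, h2, rfl⟩
    exact ⟨-f1, -f2, I.neg_mem h1, J.neg_mem h2, by abel⟩
  comp_mem := by
    rintro W X Y Z h g k ⟨g1, g2, h1, h2, rfl⟩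
    exact ⟨h ≫ g1 ≫ k, h ≫ g2 ≫ k, I.comp_mem h k h1, J.comp_mem h k h2, by
      simp [Preadditive.add_comp, Preadditive.comp_add]⟩

/-- An ideal closed under set-indexed coproducts of morphisms. -/
def ClosedUnderCoproducts [HasCoproducts.{w} A] (I : Ideal A) : Prop :=
  ∀ ⦃ι : Type w⦄ ⦃X0 X1 : ι → A⦄ (f : ∀ i, X0 i ⟶ X1 i),
    (∀ i, I.mem (f i)) → I.mem (Limits.Sigma.map f)

/-- An ideal closed under ME-extensions by projective morphisms. -/
def ClosedUnderProjME (E : ExactStructureData A) (I : Ideal A) : Prop :=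
  ∀ ⦃P0 P1 K0 K1 C0 C1 : A⦄ (p : P0 ⟶ P1) (k : K0 ⟶ K1) (c : C0 ⟶ C1),
    projClass E p → I.mem k → IsMEExtension E p k c → I.mem c

/-- `Ext_{Arr(A)}(a, b)` is a set: there is a set-indexed family of conflations of arrows
`b ⟶ c^ζ ⟶ a` representing every conflation of arrows from `b` to `a` up to equivalence. -/
def ExtArrowSmall (E : ExactStructureData A) {A0 A1 B0 B1 : A}
    (a : A0 ⟶ A1) (b : B0 ⟶ B1) : Prop :=
  ∃ (ι : Type w) (C0 C1 : ι → A) (c : ∀ z, C0 z ⟶ C1 z)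
    (i0 : ∀ z, B0 ⟶ C0 z) (p0 : ∀ z, C0 z ⟶ A0) (i1 : ∀ z, B1 ⟶ C1 z) (p1 : ∀ z, C1 z ⟶ A1),
    (∀ z, IsArrowConf E b (c z) a (i0 z) (p0 z) (i1 z) (p1 z)) ∧
    ∀ ⦃D0 D1 : A⦄ (d : D0 ⟶ D1) (j0 : B0 ⟶ D0) (q0 : D0 ⟶ A0) (j1 : B1 ⟶ D1) (q1 : D1 ⟶ A1),
      IsArrowConf E b d a j0 q0 j1 q1 →
      ∃ z, ArrowConfEquiv (c z) (i0 z) (p0 z) (i1 z) (p1 z) d j0 q0 j1 q1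

/-- `Ext(X, B)` is a set: there is a set-indexed family of conflations `B ⟶ C^z ⟶ X`
representing every conflation from `B` to `X` up to equivalence. -/
def ExtObjSmall (E : ExactStructureData A) (X B : A) : Prop :=
  ∃ (ι : Type w) (C : ι → A) (m : ∀ z, B ⟶ C z) (p : ∀ z, C z ⟶ X),
    (∀ z, E.conf (m z) (p z)) ∧
    ∀ ⦃D : A⦄ (m' : B ⟶ D) (p' : D ⟶ X), E.conf m' p' →
      ∃ z, ∃ e : C z ≅ D, m z ≫ e.hom = m' ∧ e.hom ≫ p' = p z

/-- `Add X`: direct summands of coproducts of copies of `X`. -/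
def AddClosure [HasCoproducts.{w} A] (X : A) : A → Prop := fun M =>
  ∃ (ι : Type w) (s : M ⟶ ∐ (fun _ : ι => X)) (r : (∐ fun _ : ι => X) ⟶ M), s ≫ r = 𝟙 M

/-- The object ideal of morphisms factoring through an object of `S`. -/
def objIdeal (S : A → Prop) : MorClass A := fun X Y f =>
  ∃ (M : A) (g : X ⟶ M) (h : M ⟶ Y), S M ∧ f = g ≫ h


variable [HasProducts.{w} A]

set_option linter.unusedSectionVars false

section Aux

variable (E : ExactStructureData A) (hE : E.IsExact)
include hE

/-- Factorization through the kernel of a conflation. -/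
lemma conf_ker_lift {K C X T : A} {i : K ⟶ C} {p : C ⟶ X} (h : E.conf i p)
    (t : T ⟶ C) (ht : t ≫ p = 0) : ∃ u : T ⟶ K, u ≫ i = t := by
  obtain ⟨hl⟩ := (hE.ker_coker h).isKernel
  obtain ⟨u, hu⟩ := KernelFork.IsLimit.lift' hl t ht
  exact ⟨u, by simpa using hu⟩

/-- Factorization through the cokernel of a conflation. -/
lemma conf_coker_desc {K C X T : A} {i : K ⟶ C} {p : C ⟶ X} (h : E.conf i p)
    (t : C ⟶ T) (ht : i ≫ t = 0) : ∃ u : X ⟶ T, p ≫ u = t := by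
  obtain ⟨hl⟩ := (hE.ker_coker h).isCokernel
  obtain ⟨u, hu⟩ := CokernelCofork.IsColimit.desc' hl t ht
  exact ⟨u, by simpa using hu⟩

/-- The inflation of a conflation is monic. -/
lemma conf_mono {K C X T : A} {i : K ⟶ C} {p : C ⟶ X} (h : E.conf i p)
    {u v : T ⟶ K} (huv : u ≫ i = v ≫ i) : u = v :=
  Fork.IsLimit.hom_ext (hE.ker_coker h).isKernel.some (by simpa using huv)

/-- The deflation of a conflation is epic. -/
lemma conf_epi {K C X T : A} {i : K ⟶ C} {p : C ⟶ X} (h : E.conf i p)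
    {u v : X ⟶ T} (huv : p ≫ u = p ≫ v) : u = v :=
  Cofork.IsColimit.hom_ext (hE.ker_coker h).isCokernel.some (by simpa using huv)

/-- Pullback of a conflation along an arbitrary morphism, with identification of the
kernel. -/
lemma pullback_conf {K C X Z : A} {i : K ⟶ C} {p : C ⟶ X}
    (h : E.conf i p) (f : Z ⟶ X) :
    ∃ (W : A) (g : W ⟶ C) (q : W ⟶ Z) (κ : K ⟶ W),
      IsPullback g q p f ∧ E.conf κ q ∧ κ ≫ g = i ∧ κ ≫ q = 0 := by
  obtain ⟨W, g, q, hpb, hdefl⟩ := hE.pullback_deflation p f ⟨K, i, h⟩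
  obtain ⟨K', i', h'⟩ := hdefl
  have hip : i ≫ p = 0 := (hE.ker_coker h).w
  have hiz : i ≫ p = (0 : K ⟶ Z) ≫ f := by simp [hip]
  set κ : K ⟶ W := hpb.lift i 0 hiz with hκdef
  have hκg : κ ≫ g = i := hpb.lift_fst _ _ _
  have hκq : κ ≫ q = 0 := hpb.lift_snd _ _ _
  obtain ⟨hker⟩ := (hE.ker_coker h).isKernel
  have key : ∀ {T : A} (t : T ⟶ W), t ≫ q = 0 → (t ≫ g) ≫ p = 0 := by
    intro T t ht
    rw [Category.assoc, hpb.w, ← Category.assoc, ht, zero_comp]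
  have hlim : IsLimit (KernelFork.ofι κ hκq) := by
    refine KernelFork.IsLimit.ofι κ hκq
      (fun {T} t ht => (KernelFork.IsLimit.lift' hker (t ≫ g) (key t ht)).1)
      (fun {T} t ht => ?_) (fun {T} t ht m hm => ?_)
    · have hfac := (KernelFork.IsLimit.lift' hker (t ≫ g) (key t ht)).2
      simp only [Fork.ι_ofι] at hfac
      apply hpb.hom_ext
      · rw [Category.assoc, hκg, hfac]
      · rw [Category.assoc, hκq, ht, comp_zero]
    · apply Fork.IsLimit.hom_ext hker
      have hfac := (KernelFork.IsLimit.lift' hker (t ≫ g) (key t ht)).2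
      simp only [Fork.ι_ofι] at hfac ⊢
      rw [hfac, ← hm, Category.assoc, hκg]
  obtain ⟨hker'⟩ := (hE.ker_coker h').isKernel
  let e : K' ≅ K := IsLimit.conePointUniqueUpToIso hker' hlim
  have he : e.hom ≫ κ = i' := by
    have := IsLimit.conePointUniqueUpToIso_hom_comp hker' hlim WalkingParallelPair.zero
    simpa [e] using this
  refine ⟨W, g, q, κ, hpb, ?_, hκg, hκq⟩
  exact hE.iso_closed e (Iso.refl W) (Iso.refl Z) (by simpa using he.symm) (by simp) h'

/-- Pushout of a conflation along an arbitrary morphism, with identification of the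
cokernel. -/
lemma pushout_conf {K C X K' : A} {i : K ⟶ C} {p : C ⟶ X}
    (h : E.conf i p) (f : K ⟶ K') :
    ∃ (C' : A) (c : C ⟶ C') (i' : K' ⟶ C') (p' : C' ⟶ X),
      IsPushout i f c i' ∧ E.conf i' p' ∧ c ≫ p' = p ∧ i' ≫ p' = 0 := by
  obtain ⟨C', c, i', hpo, hinfl⟩ := hE.pushout_inflation i f ⟨X, p, h⟩
  obtain ⟨X'', p'', h''⟩ := hinfl
  have hip : i ≫ p = 0 := (hE.ker_coker h).w
  set p' : C' ⟶ X := hpo.desc p 0 (by simp [hip]) with hp'def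
  have hcp : c ≫ p' = p := hpo.inl_desc _ _ _
  have hip' : i' ≫ p' = 0 := hpo.inr_desc _ _ _
  obtain ⟨hcoker⟩ := (hE.ker_coker h).isCokernel
  have key : ∀ {T : A} (t : C' ⟶ T), i' ≫ t = 0 → i ≫ (c ≫ t) = 0 := by
    intro T t ht
    rw [← Category.assoc, hpo.w, Category.assoc, ht, comp_zero]
  have hcolim : IsColimit (CokernelCofork.ofπ p' hip') := by
    refine CokernelCofork.IsColimit.ofπ p' hip'
      (fun {T} t ht => (CokernelCofork.IsColimit.desc' hcoker (c ≫ t) (key t ht)).1)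
      (fun {T} t ht => ?_) (fun {T} t ht m hm => ?_)
    · have hfac := (CokernelCofork.IsColimit.desc' hcoker (c ≫ t) (key t ht)).2
      simp only [Cofork.π_ofπ] at hfac
      apply hpo.hom_ext
      · rw [← Category.assoc, hcp, hfac]
      · rw [← Category.assoc, hip', zero_comp, ht]
    · apply Cofork.IsColimit.hom_ext hcoker
      have hfac := (CokernelCofork.IsColimit.desc' hcoker (c ≫ t) (key t ht)).2
      simp only [Cofork.π_ofπ] at hfac ⊢
      rw [hfac, ← hm, ← Category.assoc, hcp]
  obtain ⟨hcoker''⟩ := (hE.ker_coker h'').isCokernel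
  let eX : X'' ≅ X := IsColimit.coconePointUniqueUpToIso hcoker'' hcolim
  have heX : p'' ≫ eX.hom = p' := by
    have := IsColimit.comp_coconePointUniqueUpToIso_hom hcoker'' hcolim WalkingParallelPair.one
    simpa [eX] using this
  refine ⟨C', c, i', p', hpo, ?_, hcp, hip'⟩
  exact hE.iso_closed (Iso.refl K') (Iso.refl C') eX (by simp) (by simpa using heX) h''

/-- `Ext(a, -)` vanishing is closed under products of morphisms. -/
lemma extZero_pi_map {ι' : Type w} {K0 K1 : ι' → A} (k : ∀ j, K0 j ⟶ K1 j)
    {A0 A1 : A} (a : A0 ⟶ A1) (hj : ∀ j, ExtZero E a (k j)) :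
    ExtZero E a (Limits.Pi.map k) := by
  intro C i p hC C' c i' p' hpo hcp hip
  -- the pushout conflation `∏ K1 ⟶ C' ⟶ A1` is a conflation
  obtain ⟨C'', c'', i'', p'', hpo'', hconf'', hcp'', hip''⟩ := pushout_conf E hE hC (Limits.Pi.map k)
  have hconf' : E.conf i' p' := by
    let φ : C'' ≅ C' := hpo''.isoIsPushout _ _ hpo
    have hφp : φ.hom ≫ p' = p'' := by
      apply hpo''.hom_ext
      · rw [← Category.assoc, IsPushout.inl_isoIsPushout_hom, hcp, hcp'']
      · rw [← Category.assoc, IsPushout.inr_isoIsPushout_hom, hip, hip'']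
    refine hE.iso_closed (Iso.refl _) φ (Iso.refl A1) ?_ ?_ hconf''
    · show i'' ≫ φ.hom = (Iso.refl _).hom ≫ i'
      rw [Iso.refl_hom, Category.id_comp]
      exact IsPushout.inr_isoIsPushout_hom _ _ hpo'' hpo
    · simpa using hφp.symm
  -- pull back `p'` along `a`
  obtain ⟨W, g, q, κ, hpb, hWconf, hκg, hκq⟩ := pullback_conf E hE hconf' a
  -- componentwise retractions
  have retr : ∀ j, ∃ ρj : W ⟶ K1 j, κ ≫ ρj = -(Limits.Pi.π K1 j) := by
    intro j
    obtain ⟨Cj, cj, ij, pj, hpoj, hconfj, hcpj, hipj⟩ := pushout_conf E hE hC (Limits.Pi.π K0 j)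
    obtain ⟨C'j, c'j, i'j, p'j, hpo'j, hconf'j, hcp'j, hip'j⟩ :=
      pushout_conf E hE hconfj (k j)
    obtain ⟨s, hs⟩ := hj j ij pj hconfj c'j i'j p'j hpo'j hcp'j hip'j
    have hw : i ≫ (cj ≫ c'j) = Limits.Pi.map k ≫ (Limits.Pi.π K1 j ≫ i'j) := by
      rw [← Category.assoc, hpoj.w, Category.assoc, hpo'j.w, ← Category.assoc,
        ← Category.assoc]
      congr 1
      simp
    set r : C' ⟶ C'j := hpo.desc (cj ≫ c'j) (Limits.Pi.π K1 j ≫ i'j) hw with hrdef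
    have hcr : c ≫ r = cj ≫ c'j := hpo.inl_desc _ _ _
    have hir : i' ≫ r = Limits.Pi.π K1 j ≫ i'j := hpo.inr_desc _ _ _
    have hrp : r ≫ p'j = p' := by
      apply hpo.hom_ext
      · rw [← Category.assoc, hcr, Category.assoc, hcp'j, hcpj, hcp]
      · rw [← Category.assoc, hir, Category.assoc, hip'j, comp_zero, hip]
    have ht : (q ≫ s - g ≫ r) ≫ p'j = 0 := by
      simp only [Preadditive.sub_comp, Category.assoc, hs, hrp, hpb.w, sub_self]
    obtain ⟨ρj, hρj⟩ := conf_ker_lift E hE hconf'j _ ht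
    refine ⟨ρj, conf_mono E hE hconf'j ?_⟩
    rw [Category.assoc, hρj, Preadditive.comp_sub, ← Category.assoc, hκq, zero_comp,
      ← Category.assoc, hκg, hir, zero_sub, Preadditive.neg_comp]
  choose ρf hρf using retr
  set ρ : W ⟶ ∏ᶜ K1 := Limits.Pi.lift (fun j => -(ρf j)) with hρdef
  have hκρ : κ ≫ ρ = 𝟙 (∏ᶜ K1) := by
    apply Limits.Pi.hom_ext
    intro j
    simp only [hρdef, Category.assoc, Limits.limit.lift_π, Fan.mk_π_app, Category.id_comp]
    rw [Preadditive.comp_neg, hρf j, neg_neg]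
  -- produce a section of q
  obtain ⟨σ, hσ⟩ := conf_coker_desc E hE hWconf (𝟙 W - ρ ≫ κ)
    (by rw [Preadditive.comp_sub, Category.comp_id, ← Category.assoc, hκρ,
      Category.id_comp, sub_self])
  have hσq : σ ≫ q = 𝟙 A0 := by
    apply conf_epi E hE hWconf
    rw [← Category.assoc, hσ, Preadditive.sub_comp, Category.id_comp, Category.assoc, hκq,
      comp_zero, sub_zero, Category.comp_id]
  exact ⟨σ ≫ g, by rw [Category.assoc, hpb.w, ← Category.assoc, hσq, Category.id_comp]⟩

end Aux

/-- infinite intersections of special precovering ideals.  In an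
exact category with exact products, the intersection of a set-indexed family of special
precovering ideals is special precovering. -/
theorem statement13 (E : ExactStructureData A) (hE : E.IsExact)
    (hpr : HasExactProducts.{w} E)
    {ι : Type w} (I : ι → Ideal A)
    (hI : ∀ j, SpecialPrecovering E (I j).mem) :
    SpecialPrecovering E (interFamily fun j => (I j).mem) := by
  intro B
  choose D1 e hsp using fun j => hI j B
  have hmem : ∀ j, (I j).mem (e j) := fun j => (hsp j).1
  choose K0 K1 D0 i0 p0 i1 k d h0 h1 hsq hde hperp using fun j => (hsp j).2
  have hc1 : E.conf (Limits.Pi.map i1) (Limits.Pi.map e) := hpr ι K1 D1 (fun _ => B) i1 e h1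
  have hc0 : E.conf (Limits.Pi.map i0) (Limits.Pi.map p0) := hpr ι K0 D0 (fun _ => B) i0 p0 h0
  set Δ : B ⟶ ∏ᶜ (fun _ : ι => B) := Limits.Pi.lift (fun _ => 𝟙 B) with hΔdef
  obtain ⟨W1, g1, q1, κ1, hpb1, hW1, hκg1, hκq1⟩ := pullback_conf E hE hc1 Δ
  obtain ⟨W0, g0, q0, κ0, hpb0, hW0, hκg0, hκq0⟩ := pullback_conf E hE hc0 Δ
  have hdcomp : (g0 ≫ Limits.Pi.map d) ≫ Limits.Pi.map e = q0 ≫ Δ := by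
    rw [Category.assoc, Limits.Pi.map_comp_map]
    have : (fun j => d j ≫ e j) = p0 := funext fun j => hde j
    rw [this, hpb0.w]
  set d' : W0 ⟶ W1 := hpb1.lift (g0 ≫ Limits.Pi.map d) q0 hdcomp with hd'def
  have hd'g : d' ≫ g1 = g0 ≫ Limits.Pi.map d := hpb1.lift_fst _ _ _
  have hd'q : d' ≫ q1 = q0 := hpb1.lift_snd _ _ _
  refine ⟨W1, q1, ?_, ∏ᶜ K0, ∏ᶜ K1, W0, κ0, q0, κ1, Limits.Pi.map k, d', hW0, hW1, ?_, hd'q, ?_⟩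
  · -- q1 is in every ideal I j
    intro j
    have hq1 : q1 = (g1 ≫ Limits.Pi.π D1 j) ≫ e j ≫ 𝟙 B := by
      have := congrArg (fun f => f ≫ Limits.Pi.π (fun _ : ι => B) j) hpb1.w
      simp only [Category.assoc, hΔdef] at this ⊢
      simp only [Limits.limMap_π, Limits.Pi.map_π, Discrete.natTrans_app, Limits.limit.lift_π,
        Fan.mk_π_app, Category.comp_id] at this ⊢
      exact this.symm
    rw [hq1]
    exact (I j).comp_mem _ _ (hmem j)
  · -- the commuting square on kernels
    apply hpb1.hom_ext
    · rw [Category.assoc, hd'g, ← Category.assoc, hκg0, Limits.Pi.map_comp_map,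
        Category.assoc, hκg1, Limits.Pi.map_comp_map]
      congr 1
      exact funext fun j => hsq j
    · rw [Category.assoc, hd'q, hκq0, Category.assoc, hκq1, comp_zero]
  · -- right Ext-orthogonality
    intro A0 A1 a ha
    exact extZero_pi_map E hE k a (fun j => hperp j a (ha j))

end IdealApprox
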